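/- Let p be prime, w ≥ 1, and let E = {(k_1,…,k_p) ∈ ℕ^p : Σ k_i = pw − (p−1)} and, for 0 ≤ j ≤ p−1, E_j = {k ∈ E : Σ_{i=1}^{p} i·k_i ≡ j (mod p)}. Then the cyclic shift σ(k_1,…,k_p) = (k_p, k_1,…,k_{p−1}) maps E_j bijectively onto E_{j+1 mod p}; consequently |E_j| = (1/p)·C(pw, p−1) for every j. -/
import Mathlib


/-- Let `p` be prime, `w ≥ 1`, and for `j : ℕ` let
`E_j = {k ∈ ℕ^p : ∑ k_i = p*w - (p-1), ∑ i*k_i ≡ j (mod p)}` (with `1`-based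
coefficients `i`). The cyclic shift `σ(k)_i = k_{i-1}` (indices mod `p`) maps
`E_j` bijectively onto `E_{j+1 mod p}`; consequently
`|E_j| = (1/p) * C(p*w, p-1)` for every `j`. -/
theorem cyclic_shift_on_E (p w : ℕ) (hp : p.Prime) (hw : 1 ≤ w) :
    (∀ j : ℕ, Set.BijOn
        (fun (k : Fin p → ℕ) (i : Fin p) =>
          k ⟨((i : ℕ) + (p - 1)) % p, Nat.mod_lt _ hp.pos⟩)
        {k : Fin p → ℕ | ∑ i : Fin p, k i = p * w - (p - 1)
          ∧ (∑ i : Fin p, ((i : ℕ) + 1) * k i) % p = j % p}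
        {k : Fin p → ℕ | ∑ i : Fin p, k i = p * w - (p - 1)
          ∧ (∑ i : Fin p, ((i : ℕ) + 1) * k i) % p = (j + 1) % p})
    ∧ (∀ j : ℕ, p * Nat.card {k : Fin p → ℕ // ∑ i : Fin p, k i = p * w - (p - 1)
          ∧ (∑ i : Fin p, ((i : ℕ) + 1) * k i) % p = j % p}
        = (p * w).choose (p - 1)) := by
  classical
  haveI : NeZero p := ⟨hp.pos.ne'⟩
  have hp2 := hp.two_le
  set n := p * w - (p - 1) with hn
  obtain ⟨w', rfl⟩ : ∃ w', w = w' + 1 := ⟨w - 1, by omega⟩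
  have hn1 : n = p * w' + 1 := by
    have h : p * (w' + 1) = p * w' + p := by ring
    rw [hn, h]; omega
  have hnmod : n % p = 1 % p := by rw [hn1]; exact Nat.mul_add_mod p w' 1
  set c : Fin p := ⟨p - 1, by omega⟩ with hc
  have h1p : 1 % p = 1 := Nat.mod_eq_of_lt (by omega)
  have hp1 : p - 1 ≤ p := by omega
  have hple : p ≤ p * (w' + 1) := Nat.le_mul_of_pos_right p (Nat.succ_pos w')
  have harith : ∀ m : ℕ, p ≤ m → p + (m - (p - 1)) - 1 = m := by
    intro m hm; omega
  have hc0 : c + (1 : Fin p) = 0 := by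
    apply Fin.ext
    show (p - 1 + 1 % p) % p = 0
    rw [h1p]
    have h : p - 1 + 1 = p := by omega
    rw [h, Nat.mod_self]
  have hc1 : ∀ x : Fin p, x + c + 1 = x := by
    intro x; rw [add_assoc, hc0, add_zero]
  have hc1' : ∀ x : Fin p, x + 1 + c = x := by
    intro x; rw [add_assoc, add_comm (1 : Fin p) c, hc0, add_zero]
  have hσ : (fun (k : Fin p → ℕ) (i : Fin p) =>
      k ⟨((i : ℕ) + (p - 1)) % p, Nat.mod_lt _ hp.pos⟩)
      = fun (k : Fin p → ℕ) (i : Fin p) => k (i + c) := rfl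
  have hsum : ∀ (k : Fin p → ℕ) (d : Fin p), ∑ i : Fin p, k (i + d) = ∑ i : Fin p, k i :=
    fun k d => Equiv.sum_comp (Equiv.addRight d) k
  have hkey : ∀ k : Fin p → ℕ,
      (∑ i : Fin p, ((i : ℕ) + 1) * k (i + c)) % p
        = ((∑ i : Fin p, ((i : ℕ) + 1) * k i) + ∑ i : Fin p, k i) % p := by
    intro k
    have h1 : ∑ i : Fin p, ((i : ℕ) + 1) * k (i + c)
        = ∑ j : Fin p, (((j + 1 : Fin p) : ℕ) + 1) * k j := by
      refine Fintype.sum_equiv (Equiv.addRight c) _ _ fun i => ?_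
      simp only [Equiv.coe_addRight]
      rw [hc1 i]
    have h2 : ∀ j : Fin p, ((((j + 1 : Fin p) : ℕ) + 1) * k j) % p
        = ((((j : ℕ) + 1) + 1) * k j) % p := by
      intro j
      have hv : ((j + 1 : Fin p) : ℕ) = ((j : ℕ) + 1 % p) % p := by
        rw [Fin.val_add, Fin.val_one']
      rw [hv, h1p]
      exact Nat.ModEq.mul_right _ (Nat.ModEq.add_right 1 (Nat.mod_modEq _ p))
    calc (∑ i : Fin p, ((i : ℕ) + 1) * k (i + c)) % p
        = (∑ j : Fin p, (((j + 1 : Fin p) : ℕ) + 1) * k j) % p := by rw [h1]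
      _ = (∑ j : Fin p, (((((j + 1 : Fin p) : ℕ) + 1) * k j) % p)) % p :=
          Finset.sum_nat_mod _ _ _
      _ = (∑ j : Fin p, (((((j : ℕ) + 1) + 1) * k j) % p)) % p := by
          exact congrArg (· % p) (Finset.sum_congr rfl fun j _ => h2 j)
      _ = (∑ j : Fin p, (((j : ℕ) + 1) + 1) * k j) % p :=
          (Finset.sum_nat_mod _ _ _).symm
      _ = ((∑ i : Fin p, ((i : ℕ) + 1) * k i) + ∑ i : Fin p, k i) % p := by
          rw [← Finset.sum_add_distrib]
          exact congrArg (· % p) (Finset.sum_congr rfl fun j _ => by ring)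
  have part1 : ∀ j : ℕ, Set.BijOn
      (fun (k : Fin p → ℕ) (i : Fin p) => k (i + c))
      {k : Fin p → ℕ | ∑ i : Fin p, k i = n
        ∧ (∑ i : Fin p, ((i : ℕ) + 1) * k i) % p = j % p}
      {k : Fin p → ℕ | ∑ i : Fin p, k i = n
        ∧ (∑ i : Fin p, ((i : ℕ) + 1) * k i) % p = (j + 1) % p} := by
    intro j
    refine ⟨?_, ?_, ?_⟩
    · rintro k ⟨hk1, hk2⟩
      refine ⟨by rw [hsum k c]; exact hk1, ?_⟩
      show (∑ i : Fin p, ((i : ℕ) + 1) * k (i + c)) % p = (j + 1) % p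
      rw [hkey k, hk1]
      exact Nat.ModEq.add hk2 hnmod
    · intro k _ k' _ h
      funext i
      have h2 := congrFun h (i + 1)
      simpa only [hc1' i] using h2
    · rintro k ⟨hk1, hk2⟩
      refine ⟨fun i => k (i + 1), ⟨?_, ?_⟩, ?_⟩
      · show ∑ i : Fin p, k (i + 1) = n
        rw [hsum k 1]; exact hk1
      · show (∑ i : Fin p, ((i : ℕ) + 1) * k (i + 1)) % p = j % p
        have h3 := hkey (fun i => k (i + 1))
        simp only [hc1] at h3
        rw [hsum k 1, hk1] at h3
        -- h3 : (∑ i, ((i:ℕ)+1) * k i) % p = ((∑ i, ((i:ℕ)+1) * k (i+1)) + n) % p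
        have h4 : ((∑ i : Fin p, ((i : ℕ) + 1) * k (i + 1)) + n) % p = (j + 1) % p :=
          h3.symm.trans hk2
        have h5 : Nat.ModEq p ((∑ i : Fin p, ((i : ℕ) + 1) * k (i + 1)) + 1) (j + 1) :=
          (Nat.ModEq.add_left _ hnmod.symm).trans h4
        exact Nat.ModEq.add_right_cancel' 1 h5
      · funext i
        show k (i + c + 1) = k i
        rw [hc1 i]
    
  constructor
  · intro j
    rw [hσ]
    exact part1 j
  · intro j
    set W : (Fin p → ℕ) → ℕ := fun k => (∑ i : Fin p, ((i : ℕ) + 1) * k i) % p with hW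
    set S : Finset (Fin p → ℕ) := Finset.Nat.antidiagonalTuple p n with hS
    set A : ℕ → Finset (Fin p → ℕ) := fun j => S.filter fun k => W k = j % p with hA
    have hset : ∀ m : ℕ, {k : Fin p → ℕ | ∑ i : Fin p, k i = n
        ∧ (∑ i : Fin p, ((i : ℕ) + 1) * k i) % p = m % p} = ↑(A m) := by
      intro m; ext k
      simp [hA, hS, Finset.Nat.mem_antidiagonalTuple, hW]
    have hcard : ∀ m : ℕ, Nat.card {k : Fin p → ℕ // ∑ i : Fin p, k i = n
        ∧ (∑ i : Fin p, ((i : ℕ) + 1) * k i) % p = m % p} = (A m).card := by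
      intro m
      calc Nat.card {k : Fin p → ℕ // ∑ i : Fin p, k i = n
            ∧ (∑ i : Fin p, ((i : ℕ) + 1) * k i) % p = m % p}
          = ({k : Fin p → ℕ | ∑ i : Fin p, k i = n
            ∧ (∑ i : Fin p, ((i : ℕ) + 1) * k i) % p = m % p} : Set _).ncard :=
            Nat.card_coe_set_eq _
        _ = (A m).card := by rw [hset m, Set.ncard_coe_finset]
    have hstep : ∀ m : ℕ, (A m).card = (A (m + 1)).card := by
      intro m
      rw [← hcard m, ← hcard (m + 1)]
      exact Nat.card_congr ((part1 m).equiv _)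
    have hall : ∀ m : ℕ, (A m).card = (A 0).card := by
      intro m
      induction m with
      | zero => rfl
      | succ m ih => rw [← hstep m]; exact ih
    have hmaps : ∀ x ∈ S, W x ∈ Finset.range p :=
      fun x _ => Finset.mem_range.mpr (Nat.mod_lt _ hp.pos)
    have hSA : S.card = ∑ b ∈ Finset.range p, (A b).card := by
      rw [Finset.card_eq_sum_card_fiberwise hmaps]
      refine Finset.sum_congr rfl fun b hb => ?_
      have hb' : b % p = b := Nat.mod_eq_of_lt (Finset.mem_range.mp hb)
      rw [hA]
      simp only [hb']
    have hcount : S.card = p * (A 0).card := by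
      rw [hSA, Finset.sum_congr rfl fun b _ => hall b, Finset.sum_const,
        Finset.card_range, smul_eq_mul]
    have hScard : S.card = Nat.card {f : Fin p → ℕ // ∑ i : Fin p, f i = n} := by
      have hs2 : {f : Fin p → ℕ | ∑ i : Fin p, f i = n} = ↑S := by
        ext k; simp [hS, Finset.Nat.mem_antidiagonalTuple]
      calc S.card = ({f : Fin p → ℕ | ∑ i : Fin p, f i = n} : Set _).ncard := by
            rw [hs2, Set.ncard_coe_finset]
        _ = Nat.card {f : Fin p → ℕ // ∑ i : Fin p, f i = n} :=
            (Nat.card_coe_set_eq _).symm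
    have hsym : Nat.card {f : Fin p → ℕ // ∑ i : Fin p, f i = n}
        = (p + n - 1).choose n := by
      rw [← Nat.card_congr (Sym.equivNatSumOfFintype (Fin p) n),
        Nat.card_eq_fintype_card, Sym.card_sym_eq_choose, Fintype.card_fin]
    have hfinal : S.card = (p * (w' + 1)).choose (p - 1) := by
      rw [hScard, hsym, hn, harith (p * (w' + 1)) hple]
      exact Nat.choose_symm (le_trans hp1 hple)
    calc p * Nat.card {k : Fin p → ℕ // ∑ i : Fin p, k i = n
          ∧ (∑ i : Fin p, ((i : ℕ) + 1) * k i) % p = j % p}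
        = p * (A j).card := by rw [hcard j]
      _ = p * (A 0).card := by rw [hall j]
      _ = S.card := hcount.symm
      _ = (p * (w' + 1)).choose (p - 1) := hfinal
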